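/- Let X: D(X) ⊆ H → H be a closed operator with compact resolvent, and {P_{σ_n}}_{n∈I} a resolution of the identity by orthogonal projections such that each P_{σ_n} maps D(X) into D(X) and X P_{σ_n} x = P_{σ_n} X x for all x ∈ D(X) (block-diagonal structure). Then σ(X) = ⋃_{n∈I} σ(X|_{P_{σ_n}H}), where X|_{P_{σ_n}H} is the restriction of X to the range of P_{σ_n}. -/

import Mathlib

open Metric Filter Topology

section Fredholm

variable {E : Type*} [NormedAddCommGroup E] [NormedSpace ℂ E] [CompleteSpace E]

private lemma exists_subseq_tendsto_aux (K : E →L[ℂ] E) (hK : IsCompactOperator (⇑K))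
    (u : ℕ → E) (hu : ∀ n, ‖u n‖ ≤ 1) :
    ∃ y, ∃ φ : ℕ → ℕ, StrictMono φ ∧ Tendsto (fun n => K (u (φ n))) atTop (𝓝 y) := by
  have hs : IsCompact (closure (⇑K '' closedBall 0 1)) :=
    hK.isCompact_closure_image_closedBall (f := (K : E →ₗ[ℂ] E)) 1
  have hmem : ∀ n, K (u n) ∈ closure (⇑K '' closedBall 0 1) := fun n =>
    subset_closure ⟨u n, by simpa [mem_closedBall_zero_iff] using hu n, rfl⟩
  obtain ⟨y, -, φ, hφ, hty⟩ := hs.tendsto_subseq hmem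
  exact ⟨y, φ, hφ, hty⟩

private lemma bounded_below_of_injective (K : E →L[ℂ] E) (hK : IsCompactOperator (⇑K))
    (hinj : Function.Injective ⇑(ContinuousLinearMap.id ℂ E - K)) :
    ∃ c : ℝ, 0 < c ∧ ∀ x, c * ‖x‖ ≤ ‖(ContinuousLinearMap.id ℂ E - K) x‖ := by
  set T := ContinuousLinearMap.id ℂ E - K with hTdef
  by_contra hcon
  push_neg at hcon
  have h' : ∀ n : ℕ, ∃ v : E, ‖v‖ = 1 ∧ ‖T v‖ ≤ ((n : ℝ) + 1)⁻¹ := by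
    intro n
    obtain ⟨x, hx⟩ := hcon ((n : ℝ) + 1)⁻¹ (by positivity)
    have hx0 : x ≠ 0 := by
      rintro rfl
      simp at hx
    have hxn : (0 : ℝ) < ‖x‖ := norm_pos_iff.mpr hx0
    refine ⟨((‖x‖⁻¹ : ℝ) : ℂ) • x, ?_, ?_⟩
    · rw [norm_smul, Complex.norm_real, Real.norm_eq_abs,
        abs_of_nonneg (inv_nonneg.mpr hxn.le), inv_mul_cancel₀ hxn.ne']
    · rw [map_smul, norm_smul, Complex.norm_real, Real.norm_eq_abs,
        abs_of_nonneg (inv_nonneg.mpr hxn.le)]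
      rw [inv_mul_le_iff₀ hxn, mul_comm]
      exact (le_of_lt hx).trans (by rw [mul_comm])
  choose v hv1 hv2 using h'
  obtain ⟨y, φ, hφ, hty⟩ := exists_subseq_tendsto_aux K hK v (fun n => (hv1 n).le)
  have hT0 : Tendsto (fun n => T (v (φ n))) atTop (𝓝 0) := by
    refine squeeze_zero_norm (a := fun n : ℕ => ((n : ℝ) + 1)⁻¹) (fun n => ?_) ?_
    · refine (hv2 (φ n)).trans ?_
      have h0 : n ≤ φ n := hφ.le_apply
      have h1 : (n : ℝ) + 1 ≤ (φ n : ℝ) + 1 := by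
        exact_mod_cast Nat.add_le_add_right h0 1
      exact inv_anti₀ (by positivity) h1
    · simpa only [one_div] using (tendsto_one_div_add_atTop_nhds_zero_nat :
        Tendsto (fun n : ℕ => 1 / ((n : ℝ) + 1)) atTop (𝓝 0))
  have huy : Tendsto (fun n => v (φ n)) atTop (𝓝 y) := by
    have heq : (fun n => v (φ n)) = fun n => T (v (φ n)) + K (v (φ n)) := by
      funext n
      simp [hTdef, ContinuousLinearMap.sub_apply]
    rw [heq]
    simpa using hT0.add hty
  have hy1 : ‖y‖ = 1 := by
    have h1 : Tendsto (fun n => ‖v (φ n)‖) atTop (𝓝 ‖y‖) :=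
      (continuous_norm.tendsto y).comp huy
    have h2 : Tendsto (fun _ : ℕ => (1 : ℝ)) atTop (𝓝 ‖y‖) := by
      simpa [hv1] using h1
    exact tendsto_nhds_unique h2 tendsto_const_nhds
  have hTy : T y = 0 := by
    have h1 : Tendsto (fun n => T (v (φ n))) atTop (𝓝 (T y)) :=
      (T.continuous.tendsto y).comp huy
    exact tendsto_nhds_unique h1 hT0
  have hy0 : y = 0 := hinj (by simpa using hTy)
  rw [hy0] at hy1
  simp at hy1

private lemma fredholm_surjective (K : E →L[ℂ] E) (hK : IsCompactOperator (⇑K))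
    (hinj : Function.Injective ⇑(ContinuousLinearMap.id ℂ E - K)) :
    Function.Surjective ⇑(ContinuousLinearMap.id ℂ E - K) := by
  set T := ContinuousLinearMap.id ℂ E - K with hTdef
  obtain ⟨c, hc, hbd⟩ := bounded_below_of_injective K hK hinj
  set cnn : NNReal := ⟨c, hc.le⟩ with hcnn
  have hanti : AntilipschitzWith cnn⁻¹ ⇑T := by
    apply T.antilipschitz_of_bound
    intro x
    have h1 := hbd x
    have h3 : ((cnn⁻¹ : NNReal) : ℝ) = c⁻¹ := by
      rw [NNReal.coe_inv]
      rfl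
    rw [h3]
    have h2 : ‖x‖ = c⁻¹ * (c * ‖x‖) := by field_simp
    rw [h2]
    exact mul_le_mul_of_nonneg_left h1 (inv_nonneg.mpr hc.le)
  have hantin : ∀ n : ℕ, ∃ Kc : NNReal, AntilipschitzWith Kc ⇑(T ^ n) := by
    intro n
    induction n with
    | zero =>
      refine ⟨1, ?_⟩
      have : ⇑(T ^ 0) = id := by
        funext x
        simp
      rw [this]
      exact AntilipschitzWith.id
    | succ n ih =>
      obtain ⟨Kc, hKc⟩ := ih
      refine ⟨cnn⁻¹ * Kc, ?_⟩
      have heq : ⇑(T ^ (n + 1)) = ⇑(T ^ n) ∘ ⇑T := by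
        funext x
        rw [pow_succ]
        rfl
      rw [heq]
      exact hKc.comp hanti
  set V : ℕ → Submodule ℂ E := fun n => LinearMap.range ((T ^ n : E →L[ℂ] E) : E →ₗ[ℂ] E) with hV
  have hVclosed : ∀ n, IsClosed ((V n : Set E)) := by
    intro n
    obtain ⟨Kc, hKc⟩ := hantin n
    have heq : (V n : Set E) = Set.range ⇑(T ^ n) := by
      ext x
      exact Iff.rfl
    rw [heq]
    exact hKc.isClosed_range (T ^ n).uniformContinuous
  have hVsucc : ∀ n, V (n + 1) ≤ V n := by
    intro n x hx
    obtain ⟨a, rfl⟩ := hx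
    refine ⟨T a, ?_⟩
    rw [pow_succ]
    rfl
  have hVanti : Antitone V := antitone_nat_of_succ_le hVsucc
  have hinjn : ∀ n : ℕ, Function.Injective ⇑(T ^ n) := by
    intro n
    induction n with
    | zero =>
      intro a b h
      simpa using h
    | succ n ih =>
      have heq : ⇑(T ^ (n + 1)) = ⇑(T ^ n) ∘ ⇑T := by
        funext x
        rw [pow_succ]
        rfl
      rw [heq]
      exact ih.comp hinj
  by_contra hsurj
  simp only [Function.Surjective, not_forall, not_exists] at hsurj
  obtain ⟨y₀, hy₀⟩ := hsurj
  have hstrict : ∀ n : ℕ, ∃ x, x ∈ V n ∧ x ∉ V (n + 1) := by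
    intro n
    refine ⟨(T ^ n) y₀, ⟨y₀, rfl⟩, ?_⟩
    rintro ⟨z, hz⟩
    apply hy₀ z
    apply hinjn n
    rw [← hz, pow_succ]
    rfl
  have hTmap : ∀ n, ∀ x ∈ V n, T x ∈ V (n + 1) := by
    intro n x hx
    obtain ⟨a, rfl⟩ := hx
    refine ⟨a, ?_⟩
    rw [pow_succ']
    rfl
  have hriesz : ∀ n : ℕ, ∃ u : E, ‖u‖ = 1 ∧ u ∈ V n ∧
      ∀ z ∈ V (n + 1), (2 : ℝ)⁻¹ ≤ ‖u - z‖ := by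
    intro n
    obtain ⟨x, hx1, hx2⟩ := hstrict n
    set W : Submodule ℂ (V n) := (V (n + 1)).comap (V n).subtype with hWdef
    have hWc : IsClosed (W : Set (V n)) := by
      have heq : (W : Set (V n)) = (Subtype.val : V n → E) ⁻¹' (V (n + 1) : Set E) := rfl
      rw [heq]
      exact (hVclosed (n + 1)).preimage continuous_subtype_val
    have hWne : ∃ v : V n, v ∉ W := ⟨⟨x, hx1⟩, by simpa [hWdef] using hx2⟩
    obtain ⟨x₀, hx₀W, hx₀⟩ := riesz_lemma hWc hWne (show (2 : ℝ)⁻¹ < 1 by norm_num)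
    have hx₀0 : (x₀ : E) ≠ 0 := by
      intro h
      exact hx₀W (by rw [show x₀ = 0 from Subtype.ext h]; exact W.zero_mem)
    have hnx : (0 : ℝ) < ‖(x₀ : E)‖ := norm_pos_iff.mpr hx₀0
    refine ⟨((‖(x₀ : E)‖⁻¹ : ℝ) : ℂ) • (x₀ : E), ?_, ?_, ?_⟩
    · rw [norm_smul, Complex.norm_real, Real.norm_eq_abs,
        abs_of_nonneg (inv_nonneg.mpr hnx.le), inv_mul_cancel₀ hnx.ne']
    · exact (V n).smul_mem _ x₀.2
    · intro z hz
      have hzn : z ∈ V n := hVsucc n hz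
      have hmem : (⟨((‖(x₀ : E)‖ : ℝ) : ℂ) • z, (V n).smul_mem _ hzn⟩ : V n) ∈ W :=
        (V (n + 1)).smul_mem _ hz
      have key := hx₀ _ hmem
      have hnorm : ‖x₀ - (⟨((‖(x₀ : E)‖ : ℝ) : ℂ) • z, (V n).smul_mem _ hzn⟩ : V n)‖
          = ‖(x₀ : E) - ((‖(x₀ : E)‖ : ℝ) : ℂ) • z‖ := rfl
      rw [hnorm] at key
      have hx₀norm : ‖x₀‖ = ‖(x₀ : E)‖ := rfl
      rw [hx₀norm] at key
      have hrw : ((‖(x₀ : E)‖⁻¹ : ℝ) : ℂ) • (x₀ : E) - z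
          = ((‖(x₀ : E)‖⁻¹ : ℝ) : ℂ) • ((x₀ : E) - ((‖(x₀ : E)‖ : ℝ) : ℂ) • z) := by
        rw [smul_sub, smul_smul]
        congr 1
        have hone : ((‖(x₀ : E)‖⁻¹ : ℝ) : ℂ) * ((‖(x₀ : E)‖ : ℝ) : ℂ) = 1 := by
          rw [← Complex.ofReal_mul, inv_mul_cancel₀ hnx.ne', Complex.ofReal_one]
        rw [hone, one_smul]
      rw [hrw, norm_smul, Complex.norm_real, Real.norm_eq_abs,
        abs_of_nonneg (inv_nonneg.mpr hnx.le)]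
      calc (2 : ℝ)⁻¹ = ‖(x₀ : E)‖⁻¹ * ((2 : ℝ)⁻¹ * ‖(x₀ : E)‖) := by
            rw [mul_comm ((2 : ℝ)⁻¹) _, ← mul_assoc, inv_mul_cancel₀ hnx.ne', one_mul]
        _ ≤ ‖(x₀ : E)‖⁻¹ * ‖(x₀ : E) - ((‖(x₀ : E)‖ : ℝ) : ℂ) • z‖ := by gcongr
  choose u hu1 hu2 hu3 using hriesz
  have hsep : ∀ n m, n < m → (2 : ℝ)⁻¹ ≤ ‖K (u n) - K (u m)‖ := by
    intro n m hnm
    have h1 : K (u n) - K (u m) = u n - (T (u n) + (u m - T (u m))) := by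
      simp only [hTdef, ContinuousLinearMap.sub_apply, ContinuousLinearMap.id_apply]
      abel
    rw [h1]
    apply hu3 n
    refine Submodule.add_mem _ (hTmap n _ (hu2 n)) (Submodule.sub_mem _ ?_ ?_)
    · exact hVanti (show n + 1 ≤ m from hnm) (hu2 m)
    · exact hVanti (show n + 1 ≤ m + 1 by omega) (hTmap m _ (hu2 m))
  obtain ⟨y, φ, hφ, hty⟩ := exists_subseq_tendsto_aux K hK u (fun n => (hu1 n).le)
  have hC : CauchySeq (fun n => K (u (φ n))) := hty.cauchySeq
  obtain ⟨N, hN⟩ := Metric.cauchySeq_iff.mp hC (2 : ℝ)⁻¹ (by norm_num)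
  have h1 := hN N le_rfl (N + 1) (by omega)
  rw [dist_eq_norm] at h1
  have h2 := hsep (φ N) (φ (N + 1)) (hφ (by omega))
  linarith

end Fredholm

/-- The spectrum of the (possibly unbounded) operator `X` with domain `D`, considered on
the invariant subspace `V`: `μ` lies in the spectrum iff there is no bounded resolvent
operator on `V` mapping into `D ⊓ V` and inverting `X − μ` there. -/
def blockSpectrum {H : Type*} [NormedAddCommGroup H] [InnerProductSpace ℂ H]
    [CompleteSpace H] (X : H →ₗ[ℂ] H) (D V : Submodule ℂ H) : Set ℂ :=
  {μ : ℂ | ¬ ∃ R : H →L[ℂ] H,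
    (∀ y ∈ V, R y ∈ D ⊓ V) ∧
    (∀ x, x ∈ D → x ∈ V → R (X x - μ • x) = x) ∧
    (∀ y ∈ V, X (R y) - μ • R y = y)}

/-- If `X` is an operator with compact resolvent whose matrix is
block-diagonal with respect to a resolution of the identity `{P n}` (each `P n` leaves
the domain invariant and commutes with `X`), then the spectrum of `X` is the union of
the spectra of the restrictions of `X` to the ranges of the `P n`. -/
theorem stmt9 {H : Type*} [NormedAddCommGroup H] [InnerProductSpace ℂ H] [CompleteSpace H]
    {I : Type*} [Countable I]
    (X : H →ₗ[ℂ] H) (D : Submodule ℂ H)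
    (P : I → H →L[ℂ] H)
    (hsa : ∀ n, IsSelfAdjoint (P n))
    (hidem : ∀ n, IsIdempotentElem (P n))
    (hdisj : ∀ m n, m ≠ n → (P m) ∘L (P n) = 0)
    (hres : ∀ x : H, HasSum (fun n => P n x) x)
    (hinv : ∀ n, ∀ x ∈ D, P n x ∈ D)
    (hcomm : ∀ n, ∀ x ∈ D, X (P n x) = P n (X x))
    (hcompres : ∃ (μ₀ : ℂ) (R : H →L[ℂ] H), IsCompactOperator R ∧
      (∀ y : H, R y ∈ D) ∧ (∀ x ∈ D, R (X x - μ₀ • x) = x) ∧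
      (∀ y : H, X (R y) - μ₀ • R y = y)) :
    blockSpectrum X D ⊤ = ⋃ n, blockSpectrum X D (LinearMap.range (P n : H →ₗ[ℂ] H)) := by
  classical
  obtain ⟨μ₀, R₀, hR₀c, hR₀D, hR₀l, hR₀r⟩ := hcompres
  ext μ
  simp only [blockSpectrum, Set.mem_setOf_eq, Set.mem_iUnion]
  constructor
  · -- full spectrum ⊆ union of block spectra
    intro hμ
    set c : ℂ := μ - μ₀ with hcdef
    set K : H →L[ℂ] H := c • R₀ with hKdef
    set T : H →L[ℂ] H := ContinuousLinearMap.id ℂ H - K with hTdef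
    have hKc : IsCompactOperator ⇑K := by
      have h1 := hR₀c.smul c
      have h2 : ⇑K = c • ⇑R₀ := by
        funext x
        simp [hKdef]
      rw [h2]
      exact h1
    have hTapp : ∀ x, T x = x - c • R₀ x := by
      intro x
      simp [hTdef, hKdef]
    -- if T were injective, we could build a global resolvent, contradicting hμ
    have hTnotinj : ¬ Function.Injective ⇑T := by
      intro hinj
      apply hμ
      have hsurj : Function.Surjective ⇑T := fredholm_surjective K hKc hinj
      have hker : LinearMap.ker (T : H →ₗ[ℂ] H) = ⊥ := LinearMap.ker_eq_bot.mpr hinj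
      have hrange : LinearMap.range (T : H →ₗ[ℂ] H) = ⊤ := LinearMap.range_eq_top.mpr hsurj
      set e := ContinuousLinearEquiv.ofBijective T hker hrange with hedef
      have hTS : ∀ y, T (e.symm y) = y := fun y => e.apply_symm_apply y
      -- injectivity of X - μ on D
      have hXinj : ∀ a ∈ D, X a - μ • a = 0 → a = 0 := by
        intro a ha h0
        have h1 := hR₀l a ha
        have h2 : X a - μ₀ • a = c • a := by
          have : X a = μ • a := by
            have := sub_eq_zero.mp h0
            exact this
          rw [this, hcdef, sub_smul]
        rw [h2, map_smul] at h1
        have hTa : T a = 0 := by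
          rw [hTapp, h1, sub_self]
        have : T a = T 0 := by rw [hTa, map_zero]
        exact hinj this
      refine ⟨R₀.comp (e.symm : H →L[ℂ] H), ?_, ?_, ?_⟩
      · intro y _
        exact Submodule.mem_inf.mpr ⟨hR₀D _, trivial⟩
      · intro x hxD _
        have hw3 : ∀ y : H, X ((R₀.comp (e.symm : H →L[ℂ] H)) y)
            - μ • (R₀.comp (e.symm : H →L[ℂ] H)) y = y := by
          intro y
          rw [ContinuousLinearMap.comp_apply, ContinuousLinearEquiv.coe_coe]
          have h1 := hR₀r (e.symm y)
          have h2 : X (R₀ (e.symm y)) - μ • R₀ (e.symm y)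
              = (X (R₀ (e.symm y)) - μ₀ • R₀ (e.symm y)) - c • R₀ (e.symm y) := by
            rw [hcdef, sub_smul]
            abel
          rw [h2, h1, ← hTapp]
          exact hTS y
        set w := X x - μ • x with hwdef
        have hRw := hw3 w
        have hRwD : (R₀.comp (e.symm : H →L[ℂ] H)) w ∈ D := hR₀D _
        have h7 : X ((R₀.comp (e.symm : H →L[ℂ] H)) w)
            - μ • ((R₀.comp (e.symm : H →L[ℂ] H)) w) = X x - μ • x := hRw.trans hwdef
        have hdiff : X ((R₀.comp (e.symm : H →L[ℂ] H)) w - x)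
            - μ • ((R₀.comp (e.symm : H →L[ℂ] H)) w - x) = 0 := by
          rw [map_sub, smul_sub]
          have h8 : X ((R₀.comp (e.symm : H →L[ℂ] H)) w) - X x
              - (μ • ((R₀.comp (e.symm : H →L[ℂ] H)) w) - μ • x)
              = (X ((R₀.comp (e.symm : H →L[ℂ] H)) w)
                - μ • ((R₀.comp (e.symm : H →L[ℂ] H)) w)) - (X x - μ • x) := by
            abel
          rw [h8, h7, sub_self]
        exact sub_eq_zero.mp (hXinj _ (Submodule.sub_mem D hRwD hxD) hdiff)
      · intro y _
        rw [ContinuousLinearMap.comp_apply, ContinuousLinearEquiv.coe_coe]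
        have h2 : X (R₀ (e.symm y)) - μ • R₀ (e.symm y)
            = (X (R₀ (e.symm y)) - μ₀ • R₀ (e.symm y)) - c • R₀ (e.symm y) := by
          rw [hcdef, sub_smul]
          abel
        rw [h2, hR₀r (e.symm y), ← hTapp]
        exact hTS y
    -- extract an eigenvector
    rw [Function.not_injective_iff] at hTnotinj
    obtain ⟨a, b, hab, hne⟩ := hTnotinj
    set x := a - b with hxdef
    have hx0 : x ≠ 0 := sub_ne_zero.mpr hne
    have hTx : T x = 0 := by
      rw [hxdef, map_sub, hab, sub_self]
    have hxeq : x = c • R₀ x := by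
      have := hTapp x
      rw [hTx] at this
      exact (sub_eq_zero.mp this.symm)
    have hxD : x ∈ D := by
      rw [hxeq]
      exact D.smul_mem _ (hR₀D x)
    have hXx : X x = μ • x := by
      have h1 : X (R₀ x) = x + μ₀ • R₀ x := by
        have := hR₀r x
        rw [sub_eq_iff_eq_add] at this
        exact this
      calc X x = X (c • R₀ x) := by rw [← hxeq]
        _ = c • X (R₀ x) := map_smul X c (R₀ x)
        _ = c • (x + μ₀ • R₀ x) := by rw [h1]
        _ = c • x + μ₀ • (c • R₀ x) := by
            rw [smul_add, smul_comm]
        _ = c • x + μ₀ • x := by rw [← hxeq]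
        _ = μ • x := by
            rw [hcdef, sub_smul]
            abel
    have hex : ∃ n, P n x ≠ 0 := by
      by_contra hall
      push_neg at hall
      have h0 : HasSum (fun n => P n x) 0 := by
        have : (fun n => P n x) = fun _ => (0 : H) := funext hall
        rw [this]
        exact hasSum_zero
      exact hx0 ((hres x).unique h0)
    obtain ⟨n, hn⟩ := hex
    refine ⟨n, ?_⟩
    rintro ⟨Rn, h1, h2, h3⟩
    have hPnD : P n x ∈ D := hinv n x hxD
    have hPnV : P n x ∈ LinearMap.range (P n : H →ₗ[ℂ] H) := ⟨x, rfl⟩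
    have heig : X (P n x) - μ • P n x = 0 := by
      rw [hcomm n x hxD, hXx, map_smul, sub_self]
    have := h2 (P n x) hPnD hPnV
    rw [heig, map_zero] at this
    exact hn this.symm
  · -- union of block spectra ⊆ full spectrum
    rintro ⟨n, hn⟩
    intro hglob
    apply hn
    obtain ⟨R, hR1, hR2, hR3⟩ := hglob
    have hRD : ∀ y, R y ∈ D := fun y => (Submodule.mem_inf.mp (hR1 y trivial)).1
    refine ⟨(P n).comp R, ?_, ?_, ?_⟩
    · intro y _
      exact Submodule.mem_inf.mpr ⟨hinv n _ (hRD y), ⟨R y, rfl⟩⟩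
    · intro x hxD hxV
      rw [ContinuousLinearMap.comp_apply, hR2 x hxD trivial]
      obtain ⟨z, rfl⟩ := hxV
      change (P n) ((P n) z) = (P n) z
      rw [← ContinuousLinearMap.mul_apply, hidem n]
    · intro y hy
      rw [ContinuousLinearMap.comp_apply, hcomm n _ (hRD y)]
      have h4 : P n (X (R y)) - μ • P n (R y) = P n (X (R y) - μ • R y) := by
        rw [map_sub, map_smul]
      rw [h4, hR3 y trivial]
      obtain ⟨z, rfl⟩ := hy
      change (P n) ((P n) z) = (P n) z
      rw [← ContinuousLinearMap.mul_apply, hidem n]
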